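/- For every real δ with 0 < δ < 1, there exist constants C ≥ 1, c > 0 and s > 0, and a strictly increasing sequence (n_i) of integers with n_i ≥ 2 satisfying log n_{i+1} ≤ C · log n_i for all i, such that for every i there exist a natural number d ≤ (log n_i)^s, finite sets A, B of vectors in (Fin d → Bool) with |A| = |B| = n_i, a set E ⊆ A × B with |E| ≥ c · n_i^{2−δ}, and a positive integer β such that: every pair (a, b) ∈ E has Hamming distance exactly β; every pair (a, b) ∈ (A × B) \ E has Hamming distance strictly greater than β; and any two distinct vectors both in A or both in B have Hamming distance strictly greater than β. -/

import Mathlib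

open Polynomial Finset

section geom
variable {q t : ℕ} [Fact (q.Prime)]

noncomputable def ee (q : ℕ) [Fact (q.Prime)] : (ZMod q × ZMod q) ≃ Fin (q*q) :=
  Fintype.equivFinOfCardEq (by simp [ZMod.card])

noncomputable def V (f : ZMod q → ZMod q) : Fin (q*q) → Bool :=
  fun i => decide (f ((ee q).symm i).1 = ((ee q).symm i).2)

lemma V_inj : Function.Injective (V (q := q)) := by
  intro f g h
  funext x
  by_contra hx
  have h1 : V f (ee q (x, f x)) = V g (ee q (x, f x)) := by rw [h]
  simp [V] at h1
  exact hx h1.symm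

noncomputable def necount (f g : ZMod q → ZMod q) : ℕ :=
  (univ.filter fun x => f x ≠ g x).card

noncomputable def agree (f g : ZMod q → ZMod q) : ℕ :=
  (univ.filter fun x => f x = g x).card

lemma agree_add_necount (f g : ZMod q → ZMod q) : agree f g + necount f g = q := by
  rw [agree, necount, Finset.card_filter_add_card_filter_not]
  simp [ZMod.card]

lemma dist_V (f g : ZMod q → ZMod q) : hammingDist (V f) (V g) = 2 * necount f g := by
  classical
  have h1 : hammingDist (V f) (V g) =
      (univ.filter fun p : ZMod q × ZMod q => V f (ee q p) ≠ V g (ee q p)).card := by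
    rw [hammingDist]
    apply Finset.card_nbij' (fun i => (ee q).symm i) (fun p => ee q p) <;>
      simp [Finset.mem_filter, Set.MapsTo, Set.LeftInvOn, Set.RightInvOn]
  rw [h1]
  have h2 : (univ.filter fun p : ZMod q × ZMod q => V f (ee q p) ≠ V g (ee q p)) =
      (univ.filter fun x => f x ≠ g x).biUnion (fun x => {(x, f x), (x, g x)}) := by
    ext ⟨x, y⟩
    simp only [Finset.mem_filter, Finset.mem_biUnion, V, Equiv.symm_apply_apply,
      Finset.mem_univ, true_and, Finset.mem_insert, Finset.mem_singleton, Prod.mk.injEq]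
    constructor
    · intro h
      refine ⟨x, ?_⟩
      by_cases h1 : f x = y <;> by_cases h2 : g x = y
      · simp_all
      · exact ⟨fun hfg => h2 (hfg ▸ h1), Or.inl ⟨rfl, h1.symm⟩⟩
      · exact ⟨fun hfg => h1 (hfg.symm ▸ h2), Or.inr ⟨rfl, h2.symm⟩⟩
      · simp_all
    · rintro ⟨a, hx, ⟨rfl, rfl⟩ | ⟨rfl, rfl⟩⟩ <;> simp [hx, Ne.symm hx]
  rw [h2, Finset.card_biUnion]
  · rw [mul_comm]
    rw [Finset.sum_congr rfl (g := fun _ => 2), Finset.sum_const, smul_eq_mul]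
    · rfl
    intro x hx
    simp only [Finset.mem_filter] at hx
    rw [Finset.card_insert_of_notMem (by simp [hx.2]), Finset.card_singleton]
  · intro x hx x' hx' hne
    simp only [Finset.disjoint_left, Finset.mem_insert, Finset.mem_singleton]
    rintro ⟨a, b⟩ h h'
    rcases h with h | h <;> rcases h' with h' | h' <;>
      exact hne (by rw [Prod.mk.injEq] at h h'; rw [← h.1, ← h'.1])


noncomputable def Pp (t : ℕ) (a : Fin t → ZMod q) : Polynomial (ZMod q) :=
  ∑ j : Fin t, Polynomial.C (a j) * Polynomial.X ^ (j : ℕ)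

lemma Pp_coeff (a : Fin t → ZMod q) (k : ℕ) :
    (Pp t a).coeff k = if h : k < t then a ⟨k, h⟩ else 0 := by
  rw [Pp, Polynomial.finset_sum_coeff]
  simp only [Polynomial.coeff_C_mul, Polynomial.coeff_X_pow]
  split
  · next h =>
    rw [Finset.sum_eq_single (⟨k, h⟩ : Fin t)]
    · simp
    · intro b _ hb
      rw [if_neg (fun hc => hb (Fin.ext hc.symm)), mul_zero]
    · simp
  · next h =>
    apply Finset.sum_eq_zero
    intro j _
    have hj : (j : ℕ) ≠ k := by omega
    rw [if_neg (fun hc => hj hc.symm), mul_zero]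

lemma Pp_natDegree_lt (ht : 1 ≤ t) (a : Fin t → ZMod q) : (Pp t a).natDegree < t := by
  have : (Pp t a).natDegree ≤ t - 1 := by
    apply Polynomial.natDegree_sum_le_of_forall_le
    intro j _
    refine le_trans (Polynomial.natDegree_mul_le) ?_
    simp only [Polynomial.natDegree_C, Polynomial.natDegree_X_pow, zero_add]
    omega
  omega

lemma Pp_sub (a b : Fin t → ZMod q) : Pp t a - Pp t b = Pp t (a - b) := by
  rw [Pp, Pp, Pp, ← Finset.sum_sub_distrib]
  congr 1; funext j
  simp [sub_mul]

noncomputable def Qp (t : ℕ) (b : Fin t → ZMod q) : Polynomial (ZMod q) :=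
  Polynomial.X ^ t + Pp t b

lemma Qp_sub_Pp (a b : Fin t → ZMod q) : Qp t b - Pp t a = Polynomial.X ^ t + Pp t (b - a) := by
  rw [Qp, ← Pp_sub]; ring

lemma XtP_ne_zero (ht : 1 ≤ t) (c : Fin t → ZMod q) :
    Polynomial.X ^ t + Pp t c ≠ 0 := by
  intro h
  have h1 : (Polynomial.X ^ t + Pp t c).coeff t = 1 := by
    rw [Polynomial.coeff_add, Polynomial.coeff_X_pow, Pp_coeff]
    simp
  rw [h] at h1
  simp at h1

lemma XtP_natDegree (ht : 1 ≤ t) (c : Fin t → ZMod q) :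
    (Polynomial.X ^ t + Pp t c).natDegree ≤ t := by
  refine le_trans (Polynomial.natDegree_add_le _ _) ?_
  simp only [Polynomial.natDegree_X_pow]
  exact max_le le_rfl (le_of_lt (Pp_natDegree_lt ht c))

lemma rootBound {p : Polynomial (ZMod q)} (hp : p ≠ 0) :
    (univ.filter fun x => p.eval x = 0).card ≤ p.natDegree := by
  have hsub : (univ.filter fun x => p.eval x = 0) ⊆ p.roots.toFinset := by
    intro x hx
    simp only [Finset.mem_filter] at hx
    simp [Polynomial.mem_roots', hp, Polynomial.IsRoot, hx.2]
  refine le_trans (Finset.card_le_card hsub) ?_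
  refine le_trans (Multiset.toFinset_card_le _) ?_
  exact_mod_cast Polynomial.card_roots' p

noncomputable def fP (t : ℕ) (a : Fin t → ZMod q) : ZMod q → ZMod q := fun x => (Pp t a).eval x
noncomputable def fQ (t : ℕ) (b : Fin t → ZMod q) : ZMod q → ZMod q := fun x => (Qp t b).eval x

lemma agree_poly (p₁ p₂ : Polynomial (ZMod q)) :
    agree (fun x => p₁.eval x) (fun x => p₂.eval x) =
    (univ.filter fun x => (p₁ - p₂).eval x = 0).card := by
  rw [agree]
  congr 1
  ext x
  simp [sub_eq_zero]

lemma cross_agree_le (ht : 1 ≤ t) (a b : Fin t → ZMod q) : agree (fP t a) (fQ t b) ≤ t := by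
  unfold fP fQ
  rw [agree_poly]
  have h1 : Pp t a - Qp t b = -(Polynomial.X ^ t + Pp t (b - a)) := by
    rw [← Qp_sub_Pp]; ring
  rw [h1]
  simp only [Polynomial.eval_neg, neg_eq_zero]
  exact le_trans (rootBound (XtP_ne_zero ht _)) (XtP_natDegree ht _)

lemma same_agree_lt (ht : 1 ≤ t) {a a' : Fin t → ZMod q} (h : a ≠ a') :
    agree (fP t a) (fP t a') < t := by
  unfold fP
  rw [agree_poly, Pp_sub]
  have hne : Pp t (a - a') ≠ 0 := by
    intro h0
    apply h
    funext j
    have := Pp_coeff (a - a') (j : ℕ)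
    rw [h0] at this
    simp only [Polynomial.coeff_zero] at this
    rw [dif_pos j.isLt] at this
    have : (a - a') j = 0 := by simpa using this.symm
    simpa [sub_eq_zero] using this
  exact lt_of_le_of_lt (rootBound hne) (Pp_natDegree_lt ht _)

lemma sameQ_agree_lt (ht : 1 ≤ t) {b b' : Fin t → ZMod q} (h : b ≠ b') :
    agree (fQ t b) (fQ t b') < t := by
  unfold fQ
  rw [agree_poly]
  have h1 : Qp t b - Qp t b' = Pp t (b - b') := by
    rw [Qp, Qp, ← Pp_sub]; ring
  rw [h1]
  have hne : Pp t (b - b') ≠ 0 := by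
    intro h0
    apply h
    funext j
    have := Pp_coeff (b - b') (j : ℕ)
    rw [h0] at this
    simp only [Polynomial.coeff_zero] at this
    rw [dif_pos j.isLt] at this
    have : (b - b') j = 0 := by simpa using this.symm
    simpa [sub_eq_zero] using this
  exact lt_of_le_of_lt (rootBound hne) (Pp_natDegree_lt ht _)

lemma fP_inj (ht1 : 1 ≤ t) (htq : t ≤ q) : Function.Injective (fP (q := q) t) := by
  intro a a' h
  by_contra hne
  have h1 := same_agree_lt ht1 hne
  have h2 : agree (fP t a) (fP t a') = q := by
    rw [h, agree]
    simp [ZMod.card]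
  omega

lemma fQ_inj (ht1 : 1 ≤ t) (htq : t ≤ q) : Function.Injective (fQ (q := q) t) := by
  intro b b' h
  by_contra hne
  have h1 := sameQ_agree_lt ht1 hne
  have h2 : agree (fQ t b) (fQ t b') = q := by
    rw [h, agree]
    simp [ZMod.card]
  omega

lemma fP_ne_fQ (ht1 : 1 ≤ t) (htq : t < q) (a b : Fin t → ZMod q) : fP t a ≠ fQ t b := by
  intro h
  have h1 := cross_agree_le ht1 a b
  have h2 : agree (fP t a) (fQ t b) = q := by
    rw [h, agree]
    simp [ZMod.card]
  omega

noncomputable def sp (S : Finset (ZMod q)) : Polynomial (ZMod q) :=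
  ∏ r ∈ S, (Polynomial.X - Polynomial.C r)

lemma sp_monic (S : Finset (ZMod q)) : (sp S).Monic :=
  Polynomial.monic_prod_of_monic _ _ (fun r _ => Polynomial.monic_X_sub_C r)

lemma sp_natDegree (S : Finset (ZMod q)) : (sp S).natDegree = S.card := by
  rw [sp, Polynomial.natDegree_prod_of_monic _ _ (fun r _ => Polynomial.monic_X_sub_C r)]
  simp

lemma sp_eval (S : Finset (ZMod q)) (x : ZMod q) :
    (sp S).eval x = 0 ↔ x ∈ S := by
  rw [sp, Polynomial.eval_prod, Finset.prod_eq_zero_iff]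
  constructor
  · rintro ⟨r, hr, h⟩
    simp only [Polynomial.eval_sub, Polynomial.eval_X, Polynomial.eval_C, sub_eq_zero] at h
    rwa [h]
  · intro hx
    exact ⟨x, hx, by simp⟩

/-- reconstruction: a monic poly of natDegree t equals X^t + Pp of its low coeffs -/
lemma monic_eq_Xt_add (p : Polynomial (ZMod q)) (hm : p.Monic) (hd : p.natDegree = t) :
    Polynomial.X ^ t + Pp t (fun j => p.coeff (j : ℕ)) = p := by
  ext k
  rw [Polynomial.coeff_add, Polynomial.coeff_X_pow, Pp_coeff]
  rcases lt_trichotomy k t with h | h | h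
  · rw [if_neg (by omega), dif_pos h, zero_add]
  · subst h
    rw [if_pos rfl, dif_neg (by omega), add_zero]
    exact (hd ▸ hm.coeff_natDegree).symm
  · rw [if_neg (by omega), dif_neg (by omega), add_zero]
    exact (Polynomial.coeff_eq_zero_of_natDegree_lt (by omega)).symm

lemma edge_of_split (ht1 : 1 ≤ t) (a : Fin t → ZMod q) (S : Finset (ZMod q))
    (hS : S.card = t) :
    agree (fP t a) (fQ t (a + fun j : Fin t => (sp S).coeff (j : ℕ))) = t := by
  unfold fP fQ
  rw [agree_poly]
  have h1 : Pp t a - Qp t (a + fun j : Fin t => (sp S).coeff (j : ℕ)) = -(sp S) := by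
    have h2 : Qp t (a + fun j : Fin t => (sp S).coeff (j : ℕ)) - Pp t a
        = Polynomial.X ^ t + Pp t (fun j : Fin t => (sp S).coeff (j : ℕ)) := by
      rw [Qp_sub_Pp]
      congr 1
      congr 1
      funext j
      simp
    have h3 := monic_eq_Xt_add (sp S) (sp_monic S) (hS ▸ sp_natDegree S)
    rw [h3] at h2
    rw [← neg_sub (Qp t (a + fun j : Fin t => (sp S).coeff (j : ℕ))) (Pp t a), h2]
  rw [h1]
  have h4 : (univ.filter fun x => (-(sp S)).eval x = 0) = S := by
    ext x
    simp [sp_eval]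
  rw [h4, hS]

noncomputable def Aset (q t : ℕ) [Fact (q.Prime)] : Finset (Fin (q*q) → Bool) :=
  univ.image (fun a : Fin t → ZMod q => V (fP t a))

noncomputable def Bset (q t : ℕ) [Fact (q.Prime)] : Finset (Fin (q*q) → Bool) :=
  univ.image (fun b : Fin t → ZMod q => V (fQ t b))

noncomputable def Eset (q t : ℕ) [Fact (q.Prime)] :
    Finset ((Fin (q*q) → Bool) × (Fin (q*q) → Bool)) :=
  ((univ ×ˢ univ).filter fun ab : (Fin t → ZMod q) × (Fin t → ZMod q) =>
    agree (fP t ab.1) (fQ t ab.2) = t).image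
    (fun ab => (V (fP t ab.1), V (fQ t ab.2)))

lemma Aset_card (ht1 : 1 ≤ t) (htq : t < q) : (Aset q t).card = q ^ t := by
  rw [Aset, Finset.card_image_of_injective _ (fun a a' h => fP_inj ht1 (le_of_lt htq) (V_inj h))]
  simp [ZMod.card]

lemma Bset_card (ht1 : 1 ≤ t) (htq : t < q) : (Bset q t).card = q ^ t := by
  rw [Bset, Finset.card_image_of_injective _ (fun b b' h => fQ_inj ht1 (le_of_lt htq) (V_inj h))]
  simp [ZMod.card]

lemma Eset_card (ht1 : 1 ≤ t) (htq : t < q) : q ^ t * q.choose t ≤ (Eset q t).card := by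
  rw [Eset, Finset.card_image_of_injective _ (f := fun ab : (Fin t → ZMod q) × (Fin t → ZMod q) => (V (fP t ab.1), V (fQ t ab.2)))]
  · have hinj : Set.InjOn
        (fun p : (Fin t → ZMod q) × Finset (ZMod q) =>
          ((p.1, p.1 + fun j : Fin t => (sp p.2).coeff (j : ℕ)) : (Fin t → ZMod q) × (Fin t → ZMod q)))
        ↑((univ : Finset (Fin t → ZMod q)) ×ˢ (univ : Finset (ZMod q)).powersetCard t) := by
      rintro ⟨a, S⟩ hS ⟨a', S'⟩ hS' heq
      simp only [Prod.mk.injEq] at heq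
      obtain ⟨rfl, h2⟩ := heq
      have hc : ∀ j : Fin t, (sp S).coeff (j : ℕ) = (sp (q := q) S').coeff (j : ℕ) := by
        intro j
        have := congrFun h2 j
        simpa using this
      simp only [Finset.mem_coe, Finset.mem_product, Finset.mem_powersetCard] at hS hS'
      have hScard : S.card = t := hS.2.2
      have hS'card : S'.card = t := hS'.2.2
      have hsp : sp S = sp (q := q) S' := by
        rw [← monic_eq_Xt_add (sp S) (sp_monic S) (hScard ▸ sp_natDegree S),
            ← monic_eq_Xt_add (sp S') (sp_monic S') (hS'card ▸ sp_natDegree S')]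
        congr 1
        congr 1
        funext j
        exact hc j
      have : S = S' := by
        ext r
        rw [← sp_eval (q := q) S r, ← sp_eval (q := q) S' r, hsp]
      rw [this]
    have hmaps : ∀ p ∈ (univ ×ˢ (univ : Finset (ZMod q)).powersetCard t),
        ((p.1, p.1 + fun j : Fin t => (sp p.2).coeff (j : ℕ)) : (Fin t → ZMod q) × (Fin t → ZMod q)) ∈
        ((univ ×ˢ univ).filter fun ab : (Fin t → ZMod q) × (Fin t → ZMod q) =>
          agree (fP t ab.1) (fQ t ab.2) = t) := by
      rintro ⟨a, S⟩ hp
      simp only [Finset.mem_product, Finset.mem_powersetCard] at hp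
      simp only [Finset.mem_filter, Finset.mem_product, Finset.mem_univ, true_and]
      exact edge_of_split ht1 a S hp.2.2
    have := Finset.card_le_card_of_injOn _ hmaps hinj
    refine le_trans (le_of_eq ?_) this
    rw [Finset.card_product, Finset.card_powersetCard]
    simp [ZMod.card]
  · rintro ⟨a, b⟩ ⟨a', b'⟩ h
    simp only [Prod.mk.injEq] at h
    exact Prod.ext (fP_inj ht1 (le_of_lt htq) (V_inj h.1)) (fQ_inj ht1 (le_of_lt htq) (V_inj h.2))

lemma construction (q t : ℕ) [Fact (q.Prime)] (ht1 : 1 ≤ t) (htq : t < q) :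
    ∃ (A B : Finset (Fin (q*q) → Bool))
      (E : Finset ((Fin (q*q) → Bool) × (Fin (q*q) → Bool))) (β : ℕ),
      A.card = q ^ t ∧ B.card = q ^ t ∧ E ⊆ A ×ˢ B ∧
      q ^ t * q.choose t ≤ E.card ∧ 0 < β ∧
      (∀ ab ∈ E, hammingDist ab.1 ab.2 = β) ∧
      (∀ a ∈ A, ∀ b ∈ B, (a, b) ∉ E → β < hammingDist a b) ∧
      (∀ a ∈ A, ∀ a' ∈ A, a ≠ a' → β < hammingDist a a') ∧
      (∀ b ∈ B, ∀ b' ∈ B, b ≠ b' → β < hammingDist b b') := by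
  refine ⟨Aset q t, Bset q t, Eset q t, 2 * (q - t), Aset_card ht1 htq, Bset_card ht1 htq,
    ?_, Eset_card ht1 htq, by omega, ?_, ?_, ?_, ?_⟩
  · intro ab hab
    rw [Eset] at hab
    simp only [Finset.mem_image, Finset.mem_filter] at hab
    obtain ⟨⟨a₀, b₀⟩, _, rfl⟩ := hab
    simp only [Finset.mem_product]
    constructor
    · rw [Aset]; exact Finset.mem_image_of_mem _ (Finset.mem_univ _)
    · rw [Bset]; exact Finset.mem_image_of_mem _ (Finset.mem_univ _)
  · intro ab hab
    rw [Eset] at hab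
    simp only [Finset.mem_image, Finset.mem_filter] at hab
    obtain ⟨⟨a₀, b₀⟩, ⟨_, hag⟩, rfl⟩ := hab
    have h1 := agree_add_necount (fP t a₀) (fQ t b₀)
    dsimp only
    rw [dist_V]
    simp only at hag
    omega
  · intro a ha b hb hnab
    rw [Aset] at ha
    rw [Bset] at hb
    simp only [Finset.mem_image, Finset.mem_univ, true_and] at ha hb
    obtain ⟨a₀, rfl⟩ := ha
    obtain ⟨b₀, rfl⟩ := hb
    have hag : agree (fP t a₀) (fQ t b₀) ≠ t := by
      intro h
      apply hnab
      rw [Eset]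
      refine Finset.mem_image.mpr ⟨(a₀, b₀), ?_, rfl⟩
      simp only [Finset.mem_filter, Finset.mem_product, Finset.mem_univ, true_and]
      exact h
    have h1 := agree_add_necount (fP t a₀) (fQ t b₀)
    have h2 := cross_agree_le ht1 a₀ b₀
    rw [dist_V]
    omega
  · intro a ha a' ha' hne
    rw [Aset] at ha ha'
    simp only [Finset.mem_image, Finset.mem_univ, true_and] at ha ha'
    obtain ⟨a₀, rfl⟩ := ha
    obtain ⟨a₀', rfl⟩ := ha'
    have hne₀ : a₀ ≠ a₀' := fun h => hne (by rw [h])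
    have h1 := agree_add_necount (fP t a₀) (fP t a₀')
    have h2 := same_agree_lt ht1 hne₀
    rw [dist_V]
    omega
  · intro b hb b' hb' hne
    rw [Bset] at hb hb'
    simp only [Finset.mem_image, Finset.mem_univ, true_and] at hb hb'
    obtain ⟨b₀, rfl⟩ := hb
    obtain ⟨b₀', rfl⟩ := hb'
    have hne₀ : b₀ ≠ b₀' := fun h => hne (by rw [h])
    have h1 := agree_add_necount (fQ t b₀) (fQ t b₀')
    have h2 := sameQ_agree_lt ht1 hne₀
    rw [dist_V]
    omega

end geom


noncomputable def Tfun (δ : ℝ) (q : ℕ) : ℕ := ⌊(q:ℝ)^(δ/2)⌋₊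

section analytic
variable {δ : ℝ} {q : ℕ} (hδ0 : 0 < δ) (hδ1 : δ < 1)
include hδ0 hδ1

lemma A1 (hqN : (2:ℝ)^((4:ℝ)/δ) ≤ (q:ℝ)) : (4:ℝ) ≤ (q:ℝ)^(δ/2) := by
  have h1 : ((2:ℝ)^((4:ℝ)/δ))^(δ/2) ≤ (q:ℝ)^(δ/2) :=
    Real.rpow_le_rpow (by positivity) hqN (by positivity)
  have h2 : ((2:ℝ)^((4:ℝ)/δ))^(δ/2) = (2:ℝ)^((2:ℝ)) := by
    rw [← Real.rpow_mul (by norm_num)]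
    congr 1
    have hδ : δ ≠ 0 := ne_of_gt hδ0
    field_simp
    ring
  rw [h2] at h1
  refine le_trans (le_of_eq ?_) h1
  rw [show ((2:ℝ)) = ((2:ℕ):ℝ) by norm_num, Real.rpow_natCast]
  norm_num

lemma A2 (hqN : (2:ℝ)^((4:ℝ)/δ) ≤ (q:ℝ)) : 2 ≤ Tfun δ q := by
  rw [Tfun]
  exact Nat.le_floor (le_trans (by norm_num) (A1 hδ0 hδ1 hqN))

omit hδ0 hδ1 in
lemma A3 : ((Tfun δ q : ℕ):ℝ) ≤ (q:ℝ)^(δ/2) := Nat.floor_le (by positivity)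

lemma A4 (hqN : (2:ℝ)^((4:ℝ)/δ) ≤ (q:ℝ)) : (q:ℝ)^(δ/2) ≤ 2 * (Tfun δ q : ℕ) := by
  have h1 : (q:ℝ)^(δ/2) < (Tfun δ q : ℕ) + 1 := Nat.lt_floor_add_one _
  have h2 := A1 hδ0 hδ1 (q := q) hqN
  linarith

lemma A5 (hq3 : 3 ≤ q) (hqN : (2:ℝ)^((4:ℝ)/δ) ≤ (q:ℝ)) : Tfun δ q < q := by
  have hx1 : (1:ℝ) < (q:ℝ) := by exact_mod_cast (by omega : 1 < q)
  have h1 : (q:ℝ)^(δ/2) < (q:ℝ)^((1:ℝ)) :=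
    Real.rpow_lt_rpow_of_exponent_lt hx1 (by linarith)
  rw [Real.rpow_one] at h1
  have := A3 (δ := δ) (q := q)
  exact_mod_cast lt_of_le_of_lt this h1

omit hδ0 hδ1 in
lemma hlogq (hq3 : 3 ≤ q) : 1 ≤ Real.log (q:ℝ) := by
  have hq0 : (0:ℝ) < (q:ℝ) := by
    have : (3:ℝ) ≤ (q:ℝ) := by exact_mod_cast hq3
    linarith
  rw [Real.le_log_iff_exp_le hq0]
  have h1 := Real.exp_one_lt_d9
  have : (3:ℝ) ≤ (q:ℝ) := by exact_mod_cast hq3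
  linarith

lemma A6 (hq3 : 3 ≤ q) (hqN : (2:ℝ)^((4:ℝ)/δ) ≤ (q:ℝ)) :
    ((q*q : ℕ):ℝ) ≤ Real.log ((q ^ (Tfun δ q) : ℕ):ℝ) ^ ((8:ℝ)/δ) := by
  have hq0 : (0:ℝ) < (q:ℝ) := by
    have : (3:ℝ) ≤ (q:ℝ) := by exact_mod_cast hq3
    linarith
  have hlog : Real.log ((q ^ (Tfun δ q) : ℕ):ℝ) = ((Tfun δ q:ℕ):ℝ) * Real.log (q:ℝ) := by
    rw [Nat.cast_pow, Real.log_pow]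
  have hlx := hlogq (q := q) hq3
  have hA4 := A4 hδ0 hδ1 (q := q) hqN
  have hA1 := A1 hδ0 hδ1 (q := q) hqN
  have hsq : (q:ℝ)^(δ/4) * (q:ℝ)^(δ/4) = (q:ℝ)^(δ/2) := by
    rw [← Real.rpow_add hq0]
    ring_nf
  have h2 : 2 ≤ (q:ℝ)^(δ/4) := by nlinarith [Real.rpow_nonneg (le_of_lt hq0) (δ/4)]
  have h3 : (q:ℝ)^(δ/4) ≤ ((Tfun δ q:ℕ):ℝ) := by nlinarith
  have h4 : (q:ℝ)^(δ/4) ≤ ((Tfun δ q:ℕ):ℝ) * Real.log (q:ℝ) := by nlinarith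
  have h5 : ((q:ℝ)^(δ/4)) ^ ((8:ℝ)/δ) ≤ (((Tfun δ q:ℕ):ℝ) * Real.log (q:ℝ)) ^ ((8:ℝ)/δ) :=
    Real.rpow_le_rpow (by positivity) h4 (by positivity)
  have h6 : ((q:ℝ)^(δ/4)) ^ ((8:ℝ)/δ) = (q:ℝ) ^ ((2:ℝ)) := by
    rw [← Real.rpow_mul (le_of_lt hq0)]
    congr 1
    have hδ : δ ≠ 0 := ne_of_gt hδ0
    field_simp
    ring
  have h7 : (q:ℝ) ^ ((2:ℝ)) = ((q*q : ℕ):ℝ) := by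
    rw [show ((2:ℝ)) = ((2:ℕ):ℝ) by norm_num, Real.rpow_natCast]
    push_cast
    ring
  rw [hlog]
  calc ((q*q : ℕ):ℝ) = ((q:ℝ)^(δ/4)) ^ ((8:ℝ)/δ) := by rw [h6, h7]
    _ ≤ _ := h5

lemma A7 (hq3 : 3 ≤ q) (hqN : (2:ℝ)^((4:ℝ)/δ) ≤ (q:ℝ)) :
    (((q ^ (Tfun δ q) : ℕ)):ℝ) ^ (2 - δ) ≤ ((q ^ (Tfun δ q) * q.choose (Tfun δ q) : ℕ):ℝ) := by
  have hq0 : (0:ℝ) < (q:ℝ) := by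
    have : (3:ℝ) ≤ (q:ℝ) := by exact_mod_cast hq3
    linarith
  have hx1 : (1:ℝ) ≤ (q:ℝ) := by exact_mod_cast (by omega : 1 ≤ q)
  have hA1 := A1 hδ0 hδ1 (q := q) hqN
  have hA3 := A3 (δ := δ) (q := q)
  have hA4 := A4 hδ0 hδ1 (q := q) hqN
  have hT2 := A2 hδ0 hδ1 (q := q) hqN
  have hTq := A5 hδ0 hδ1 (q := q) hq3 hqN
  have hB1 : (1:ℝ) ≤ (q:ℝ)^(1-δ) := by
    have := Real.rpow_le_rpow_of_exponent_le hx1 (by linarith : (0:ℝ) ≤ 1-δ)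
    rwa [Real.rpow_zero] at this
  have hAC : (q:ℝ)^(δ/2) * (q:ℝ)^(1-δ/2) = (q:ℝ) := by
    rw [← Real.rpow_add hq0]
    norm_num
  have hBC : (q:ℝ)^(1-δ) * (q:ℝ)^(δ/2) = (q:ℝ)^(1-δ/2) := by
    rw [← Real.rpow_add hq0]
    ring_nf
  have hB0 : (0:ℝ) ≤ (q:ℝ)^(1-δ) := Real.rpow_nonneg (le_of_lt hq0) _
  have hA0 : (0:ℝ) ≤ (q:ℝ)^(δ/2) := Real.rpow_nonneg (le_of_lt hq0) _
  have key : (q:ℝ)^(1-δ) * ((Tfun δ q:ℕ):ℝ) + ((Tfun δ q:ℕ):ℝ) ≤ (q:ℝ) := by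
    have h1 : ((Tfun δ q:ℕ):ℝ) * (q:ℝ)^(1-δ) ≤ (q:ℝ)^(δ/2) * (q:ℝ)^(1-δ) :=
      mul_le_mul_of_nonneg_right hA3 hB0
    have h2 : (q:ℝ)^(δ/2) ≤ (q:ℝ)^(δ/2) * (q:ℝ)^(1-δ) := by nlinarith
    have h3 : 4 * ((q:ℝ)^(δ/2) * (q:ℝ)^(1-δ)) ≤ (q:ℝ)^(δ/2) * ((q:ℝ)^(δ/2) * (q:ℝ)^(1-δ)) := by
      nlinarith
    have h4 : (q:ℝ)^(δ/2) * ((q:ℝ)^(δ/2) * (q:ℝ)^(1-δ)) = (q:ℝ) := by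
      rw [show (q:ℝ)^(δ/2) * ((q:ℝ)^(δ/2) * (q:ℝ)^(1-δ)) = ((q:ℝ)^(1-δ) * (q:ℝ)^(δ/2)) * (q:ℝ)^(δ/2) by ring, hBC]
      rw [mul_comm]
      exact hAC
    nlinarith [hA3, mul_nonneg hA0 hB0]
  have hcast : ((q + 1 - (Tfun δ q) : ℕ):ℝ) = (q:ℝ) + 1 - ((Tfun δ q:ℕ):ℝ) := by
    have h : Tfun δ q ≤ q + 1 := by omega
    push_cast [Nat.cast_sub h]
    ring
  have hchoose := Nat.pow_le_choose (α := ℝ) (Tfun δ q) q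
  have hfact : ((Tfun δ q).factorial :ℝ) ≤ ((Tfun δ q:ℕ):ℝ)^(Tfun δ q) := by
    exact_mod_cast Nat.factorial_le_pow (Tfun δ q)
  have hfactpos : (0:ℝ) < ((Tfun δ q).factorial :ℝ) := by
    exact_mod_cast (Tfun δ q).factorial_pos
  have hTpos : (0:ℝ) < ((Tfun δ q:ℕ):ℝ) := by
    have : 0 < Tfun δ q := by omega
    exact_mod_cast this
  have hstep : ((q:ℝ)^(1-δ))^(Tfun δ q) * ((Tfun δ q:ℕ):ℝ)^(Tfun δ q)
      ≤ (((q + 1 - (Tfun δ q) : ℕ)):ℝ)^(Tfun δ q) := by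
    rw [← mul_pow]
    apply pow_le_pow_left₀ (by positivity)
    rw [hcast]
    linarith
  have hstep2 : ((q:ℝ)^(1-δ))^(Tfun δ q) ≤ ((q.choose (Tfun δ q) : ℕ):ℝ) := by
    have h1 : ((q:ℝ)^(1-δ))^(Tfun δ q)
        ≤ (((q + 1 - (Tfun δ q) : ℕ)):ℝ)^(Tfun δ q) / ((Tfun δ q:ℕ):ℝ)^(Tfun δ q) := by
      rw [le_div_iff₀ (by positivity)]
      exact hstep
    have h2 : (((q + 1 - (Tfun δ q) : ℕ)):ℝ)^(Tfun δ q) / ((Tfun δ q:ℕ):ℝ)^(Tfun δ q)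
        ≤ (((q + 1 - (Tfun δ q) : ℕ)):ℝ)^(Tfun δ q) / (((Tfun δ q).factorial):ℝ) := by
      apply div_le_div_of_nonneg_left (by positivity) hfactpos hfact
    calc ((q:ℝ)^(1-δ))^(Tfun δ q) ≤ _ := h1
      _ ≤ _ := h2
      _ ≤ _ := hchoose
  have hNpos : (0:ℝ) < (q:ℝ)^(Tfun δ q) := by positivity
  have hNcast : (((q ^ (Tfun δ q) : ℕ)):ℝ) = (q:ℝ)^(Tfun δ q) := by push_cast; ring
  have hsplit : ((q:ℝ)^(Tfun δ q)) ^ (2 - δ)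
      = (q:ℝ)^(Tfun δ q) * ((q:ℝ)^(Tfun δ q)) ^ (1 - δ) := by
    rw [show (2 - δ) = 1 + (1 - δ) by ring, Real.rpow_add hNpos, Real.rpow_one]
  have hswap : ((q:ℝ)^(Tfun δ q)) ^ (1 - δ) = ((q:ℝ)^(1-δ))^(Tfun δ q) := by
    rw [← Real.rpow_natCast (q:ℝ) (Tfun δ q), ← Real.rpow_mul (le_of_lt hq0), mul_comm,
      Real.rpow_mul (le_of_lt hq0), Real.rpow_natCast]
  rw [hNcast, hsplit, hswap]
  push_cast
  nlinarith [mul_le_mul_of_nonneg_left hstep2 (le_of_lt hNpos)]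

lemma A8 {q' : ℕ} (hq3 : 3 ≤ q) (hqN : (2:ℝ)^((4:ℝ)/δ) ≤ (q:ℝ))
    (hq' : q < q') (h2q : q' ≤ 2*q) :
    Real.log ((q' ^ (Tfun δ q') : ℕ):ℝ) ≤ 8 * Real.log ((q ^ (Tfun δ q) : ℕ):ℝ) := by
  have hq0 : (0:ℝ) < (q:ℝ) := by
    have : (3:ℝ) ≤ (q:ℝ) := by exact_mod_cast hq3
    linarith
  have hqq' : (q:ℝ) < (q':ℝ) := by exact_mod_cast hq'
  have hq0' : (0:ℝ) < (q':ℝ) := by linarith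
  have hxx : (q':ℝ) ≤ 2 * (q:ℝ) := by exact_mod_cast h2q
  have hlog : Real.log ((q ^ (Tfun δ q) : ℕ):ℝ) = ((Tfun δ q:ℕ):ℝ) * Real.log (q:ℝ) := by
    rw [Nat.cast_pow, Real.log_pow]
  have hlog' : Real.log ((q' ^ (Tfun δ q') : ℕ):ℝ) = ((Tfun δ q':ℕ):ℝ) * Real.log (q':ℝ) := by
    rw [Nat.cast_pow, Real.log_pow]
  have hlx := hlogq (q := q) hq3
  have hlx' : Real.log (q':ℝ) ≤ 2 * Real.log (q:ℝ) := by
    have h1 : Real.log (q':ℝ) ≤ Real.log (2 * (q:ℝ)) := Real.log_le_log hq0' hxx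
    rw [Real.log_mul (by norm_num) (ne_of_gt hq0)] at h1
    have h2 := Real.log_two_lt_d9
    linarith
  have hT'4 : ((Tfun δ q':ℕ):ℝ) ≤ 4 * ((Tfun δ q:ℕ):ℝ) := by
    have h1 : ((Tfun δ q':ℕ):ℝ) ≤ (q':ℝ)^(δ/2) := A3 (δ := δ) (q := q')
    have h2 : (q':ℝ)^(δ/2) ≤ (2*(q:ℝ))^(δ/2) :=
      Real.rpow_le_rpow (le_of_lt hq0') hxx (by positivity)
    have h3 : (2*(q:ℝ))^(δ/2) = (2:ℝ)^(δ/2) * (q:ℝ)^(δ/2) :=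
      Real.mul_rpow (by norm_num) (le_of_lt hq0)
    have h4 : (2:ℝ)^(δ/2) ≤ 2 := by
      have := Real.rpow_le_rpow_of_exponent_le (by norm_num : (1:ℝ) ≤ 2)
        (by linarith : δ/2 ≤ 1)
      rwa [Real.rpow_one] at this
    have h5 : (q:ℝ)^(δ/2) ≤ 2 * ((Tfun δ q:ℕ):ℝ) := A4 hδ0 hδ1 hqN
    have h6 : (0:ℝ) ≤ (q:ℝ)^(δ/2) := Real.rpow_nonneg (le_of_lt hq0) _
    nlinarith
  rw [hlog, hlog']
  have hlx'0 : 0 ≤ Real.log (q':ℝ) := Real.log_nonneg (by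
    have : (3:ℝ) ≤ (q:ℝ) := by exact_mod_cast hq3
    linarith)
  have hT'0 : (0:ℝ) ≤ ((Tfun δ q':ℕ):ℝ) := by positivity
  have hT0 : (0:ℝ) ≤ ((Tfun δ q:ℕ):ℝ) := by positivity
  nlinarith

end analytic


noncomputable def nextPrime (m : ℕ) : ℕ :=
  Classical.choose (Nat.exists_prime_lt_and_le_two_mul (m+1) (Nat.succ_ne_zero m))

lemma nextPrime_spec (m : ℕ) :
    (nextPrime m).Prime ∧ m+1 < nextPrime m ∧ nextPrime m ≤ 2*(m+1) :=
  Classical.choose_spec (Nat.exists_prime_lt_and_le_two_mul (m+1) (Nat.succ_ne_zero m))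

noncomputable def seqQ (N : ℕ) : ℕ → ℕ
  | 0 => Classical.choose (Nat.exists_infinite_primes N)
  | i+1 => nextPrime (seqQ N i - 1)

lemma seqQ_base (N : ℕ) : ∀ i, (seqQ N i).Prime ∧ N ≤ seqQ N i := by
  intro i
  induction i with
  | zero =>
    have h := Classical.choose_spec (Nat.exists_infinite_primes N)
    exact ⟨h.2, h.1⟩
  | succ i ih =>
    have h2 := (ih.1).two_le
    have h := nextPrime_spec (seqQ N i - 1)
    have heq : seqQ N i - 1 + 1 = seqQ N i := by omega
    rw [heq] at h
    refine ⟨h.1, ?_⟩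
    have := ih.2
    show N ≤ nextPrime (seqQ N i - 1)
    omega

lemma seqQ_step (N : ℕ) (i : ℕ) :
    seqQ N i < seqQ N (i+1) ∧ seqQ N (i+1) ≤ 2 * seqQ N i := by
  have h2 := ((seqQ_base N i).1).two_le
  have h := nextPrime_spec (seqQ N i - 1)
  have heq : seqQ N i - 1 + 1 = seqQ N i := by omega
  rw [heq] at h
  exact ⟨h.2.1, h.2.2⟩

/-- for every `0 < δ < 1` there is a log-dense sequence `(n_i)` of sizes
for which there are dense bipartite graphs on `n_i + n_i` Boolean vectors in dimension
`(log n_i)^s` with at least `c · n_i^{2-δ}` edges, realized in the Hamming metric: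
edges at distance exactly `β`, all other (cross or same-side) distinct pairs at
distance strictly greater than `β`. -/
theorem stmt_7 (δ : ℝ) (hδ0 : 0 < δ) (hδ1 : δ < 1) :
    ∃ (C c s : ℝ) (n : ℕ → ℕ),
      1 ≤ C ∧ 0 < c ∧ 0 < s ∧
      StrictMono n ∧ (∀ i, 2 ≤ n i) ∧
      (∀ i, Real.log (n (i + 1)) ≤ C * Real.log (n i)) ∧
      (∀ i, ∃ (d : ℕ) (A B : Finset (Fin d → Bool))
          (E : Finset ((Fin d → Bool) × (Fin d → Bool))) (β : ℕ),
        (d : ℝ) ≤ Real.log (n i) ^ s ∧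
        A.card = n i ∧ B.card = n i ∧
        E ⊆ A ×ˢ B ∧
        c * (n i : ℝ) ^ (2 - δ) ≤ (E.card : ℝ) ∧
        0 < β ∧
        (∀ ab ∈ E, hammingDist ab.1 ab.2 = β) ∧
        (∀ a ∈ A, ∀ b ∈ B, (a, b) ∉ E → β < hammingDist a b) ∧
        (∀ a ∈ A, ∀ a' ∈ A, a ≠ a' → β < hammingDist a a') ∧
        (∀ b ∈ B, ∀ b' ∈ B, b ≠ b' → β < hammingDist b b')) := by
  obtain ⟨N₀, hN₀⟩ := exists_nat_ge ((2:ℝ)^((4:ℝ)/δ))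
  set N := max N₀ 3 with hNdef
  have hN3 : 3 ≤ N := le_max_right _ _
  have hNr : (2:ℝ)^((4:ℝ)/δ) ≤ (N:ℝ) := by
    refine le_trans hN₀ ?_
    exact_mod_cast le_max_left N₀ 3
  -- facts about each q in the sequence
  have hq3 : ∀ i, 3 ≤ seqQ N i := fun i => le_trans hN3 (seqQ_base N i).2
  have hqN : ∀ i, (2:ℝ)^((4:ℝ)/δ) ≤ ((seqQ N i : ℕ):ℝ) := by
    intro i
    refine le_trans hNr ?_
    exact_mod_cast (seqQ_base N i).2
  refine ⟨8, 1, 8/δ, fun i => (seqQ N i) ^ (Tfun δ (seqQ N i)), by norm_num, one_pos,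
    by positivity, ?_, ?_, ?_, ?_⟩
  · -- strict mono
    apply strictMono_nat_of_lt_succ
    intro i
    have hstep := seqQ_step N i
    have hT2 := A2 hδ0 hδ1 (hqN i)
    have hTmono : Tfun δ (seqQ N i) ≤ Tfun δ (seqQ N (i+1)) := by
      apply Nat.floor_le_floor
      apply Real.rpow_le_rpow (by positivity) ?_ (by positivity)
      exact_mod_cast le_of_lt hstep.1
    calc (seqQ N i) ^ (Tfun δ (seqQ N i))
        < (seqQ N (i+1)) ^ (Tfun δ (seqQ N i)) := by
          apply Nat.pow_lt_pow_left hstep.1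
          omega
      _ ≤ (seqQ N (i+1)) ^ (Tfun δ (seqQ N (i+1))) := by
          apply Nat.pow_le_pow_right (by omega) hTmono
  · -- n i ≥ 2
    intro i
    have hT2 := A2 hδ0 hδ1 (hqN i)
    have h2 : 2 ≤ seqQ N i := by have := hq3 i; omega
    calc 2 ≤ seqQ N i := h2
      _ ≤ (seqQ N i) ^ (Tfun δ (seqQ N i)) := Nat.le_self_pow (by omega) _
  · -- log dense
    intro i
    have hstep := seqQ_step N i
    exact A8 hδ0 hδ1 (hq3 i) (hqN i) hstep.1 hstep.2
  · -- the construction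
    intro i
    haveI : Fact ((seqQ N i).Prime) := ⟨(seqQ_base N i).1⟩
    have hT2 := A2 hδ0 hδ1 (hqN i)
    have hTq := A5 hδ0 hδ1 (hq3 i) (hqN i)
    obtain ⟨A, B, E, β, hA, hB, hE, hcard, hβ, h1, h2, h3, h4⟩ :=
      construction (seqQ N i) (Tfun δ (seqQ N i)) (by omega) hTq
    refine ⟨(seqQ N i)*(seqQ N i), A, B, E, β, ?_, hA, hB, hE, ?_, hβ, h1, h2, h3, h4⟩
    · exact A6 hδ0 hδ1 (hq3 i) (hqN i)
    · rw [one_mul]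
      refine le_trans (A7 hδ0 hδ1 (hq3 i) (hqN i)) ?_
      exact_mod_cast hcard
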